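/- Let V be a finite-dimensional real inner product space, U ⊆ V open, ρ, u : U → ℝ C² functions, and x ∈ U a point with ρ(x) = 0. Then for every orthonormal p-tuple (e₁,…,e_p) in V with Dρ(x)(e_j) = 0 for all j (a p-plane tangential to the level set {ρ = 0}), one has Σ_{j=1}^p D²(u·ρ)(x)(e_j,e_j) = u(x)·Σ_{j=1}^p D²ρ(x)(e_j,e_j). Consequently the φ-convexity of a hypersurface is independent of the choice of defining function. (Lemma 5.2, Euclidean case) -/

import Mathlib

open scoped RealInnerProductSpace

noncomputable section

variable {V : Type*} [NormedAddCommGroup V] [InnerProductSpace ℝ V] [FiniteDimensional ℝ V]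

/-- Lemma 5.2 (Euclidean case): let `ρ, u` be `C²` functions on an open set `U` and let
`x ∈ U` satisfy `ρ(x) = 0`.  Then for every orthonormal `p`-tuple `(e₁,…,e_p)` with
`Dρ(x)(e_j) = 0` for all `j` (a `p`-plane tangential to the level set `{ρ = 0}`),
`Σ_j D²(u·ρ)(x)(e_j,e_j) = u(x)·Σ_j D²ρ(x)(e_j,e_j)`.  Consequently the `φ`-convexity of a
hypersurface is independent of the choice of defining function. -/
theorem traceAlong_hessian_mul_defining {p : ℕ} (hp : 1 ≤ p)
    (U : Set V) (hU : IsOpen U) (ρ u : V → ℝ)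
    (hρ : ContDiffOn ℝ 2 ρ U) (hu : ContDiffOn ℝ 2 u U)
    (x : V) (hx : x ∈ U) (hρx : ρ x = 0)
    (e : Fin p → V) (he : Orthonormal ℝ e)
    (htang : ∀ j, fderiv ℝ ρ x (e j) = 0) :
    ∑ j, iteratedFDeriv ℝ 2 (fun y => u y * ρ y) x ![e j, e j] =
      u x * ∑ j, iteratedFDeriv ℝ 2 ρ x ![e j, e j] := by
  have hρ1 : ContDiffOn ℝ 1 (fderiv ℝ ρ) U := hρ.fderiv_of_isOpen hU (by norm_num)
  have hu1 : ContDiffOn ℝ 1 (fderiv ℝ u) U := hu.fderiv_of_isOpen hU (by norm_num)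
  have hρd : DifferentiableAt ℝ ρ x :=
    (hρ.differentiableOn (by norm_num)).differentiableAt (hU.mem_nhds hx)
  have hud : DifferentiableAt ℝ u x :=
    (hu.differentiableOn (by norm_num)).differentiableAt (hU.mem_nhds hx)
  have hρd' : DifferentiableAt ℝ (fderiv ℝ ρ) x :=
    (hρ1.differentiableOn (by norm_num)).differentiableAt (hU.mem_nhds hx)
  have hud' : DifferentiableAt ℝ (fderiv ℝ u) x :=
    (hu1.differentiableOn (by norm_num)).differentiableAt (hU.mem_nhds hx)
  have heq : (fun y => fderiv ℝ (fun z => u z * ρ z) y) =ᶠ[nhds x]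
      fun y => u y • fderiv ℝ ρ y + ρ y • fderiv ℝ u y := by
    filter_upwards [hU.mem_nhds hx] with y hy
    exact fderiv_mul ((hu.differentiableOn (by norm_num)).differentiableAt (hU.mem_nhds hy))
      ((hρ.differentiableOn (by norm_num)).differentiableAt (hU.mem_nhds hy))
  have key : ∀ j, iteratedFDeriv ℝ 2 (fun y => u y * ρ y) x ![e j, e j] =
      u x * iteratedFDeriv ℝ 2 ρ x ![e j, e j] := by
    intro j
    rw [iteratedFDeriv_two_apply, iteratedFDeriv_two_apply]
    simp only [Matrix.cons_val_zero, Matrix.cons_val_one, Matrix.head_cons]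
    rw [heq.fderiv_eq]
    rw [fderiv_fun_add (f := fun y => u y • fderiv ℝ ρ y) (g := fun y => ρ y • fderiv ℝ u y)
      (hud.smul hρd') (hρd.smul hud')]
    rw [fderiv_fun_smul hud hρd', fderiv_fun_smul hρd hud']
    simp [htang j, hρx, mul_comm]
  rw [Finset.mul_sum]
  exact Finset.sum_congr rfl fun j _ => key j
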